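/- The symmetrizer matrix factorizes as S_{d,r} = Π_{k=1}^r (T_{d,k} ⊗ I_{d^{r−k}}) = (T_{d,1} ⊗ I_{d^{r−1}})(T_{d,2} ⊗ I_{d^{r−2}})···(T_{d,r−1} ⊗ I_d) T_{d,r}, for any r ≥ 1. -/

import Mathlib

open Matrix

/-- Kronecker product of real matrices, with `Fin` index arithmetic: the row index
`i < m*p` encodes the pair `(i / p, i % p)` (first factor most significant). -/
def kron {m n p q : ℕ} (A : Matrix (Fin m) (Fin n) ℝ) (B : Matrix (Fin p) (Fin q) ℝ) :
    Matrix (Fin (m * p)) (Fin (n * q)) ℝ := fun i j =>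
  A ⟨i.val / p, Nat.div_lt_of_lt_mul (Nat.mul_comm m p ▸ i.isLt)⟩
    ⟨j.val / q, Nat.div_lt_of_lt_mul (Nat.mul_comm n q ▸ j.isLt)⟩ *
  B ⟨i.val % p, Nat.mod_lt _ (by
      rcases Nat.eq_zero_or_pos p with hp | hp
      · exact absurd i.isLt (by simp [hp])
      · exact hp)⟩
    ⟨j.val % q, Nat.mod_lt _ (by
      rcases Nat.eq_zero_or_pos q with hq | hq
      · exact absurd j.isLt (by simp [hq])
      · exact hq)⟩

/-- The commutation matrix `K_{r,s}` of order `rs × rs`, characterized by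
`K_{r,s} vec(M) = vec(Mᵀ)` for every `r × s` matrix `M` (column-major `vec`). -/
def commMat (r s : ℕ) : Matrix (Fin (r * s)) (Fin (r * s)) ℝ := fun a b =>
  if (a : ℕ) = (b : ℕ) / r + (b : ℕ) % r * s then 1 else 0

/-- Cast a matrix along equalities of its `Fin` dimensions. -/
def mcast {m n m' n' : ℕ} (hm : m = m') (hn : n = n')
    (A : Matrix (Fin m) (Fin n) ℝ) : Matrix (Fin m') (Fin n') ℝ :=
  Matrix.reindex (finCongr hm) (finCongr hn) A

/-- The `ℓ`-th base-`d` digit (most significant first) of an index `a < d^k`. -/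
def digit (d k : ℕ) [NeZero d] (a : Fin (d ^ k)) (ℓ : ℕ) : Fin d :=
  ⟨(a : ℕ) / d ^ (k - 1 - ℓ) % d, Nat.mod_lt _ (Nat.pos_of_ne_zero (NeZero.ne d))⟩

/-- The `k`-fold Kronecker product `M 0 ⊗ M 1 ⊗ ⋯ ⊗ M (k-1)` of `d × d` matrices,
as a `d^k × d^k` matrix. -/
def kronPow {d : ℕ} [NeZero d] (k : ℕ) (M : Fin k → Matrix (Fin d) (Fin d) ℝ) :
    Matrix (Fin (d ^ k)) (Fin (d ^ k)) ℝ := fun a b =>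
  ∏ ℓ : Fin k, M ℓ (digit d k a ℓ) (digit d k b ℓ)

/-- The `k`-fold Kronecker product `v 0 ⊗ v 1 ⊗ ⋯ ⊗ v (k-1)` of vectors in `ℝ^d`,
as a vector in `ℝ^{d^k}`. -/
def vkron {d : ℕ} [NeZero d] (k : ℕ) (v : Fin k → (Fin d → ℝ)) : Fin (d ^ k) → ℝ :=
  fun a => ∏ ℓ : Fin k, v ℓ (digit d k a ℓ)

/-- The symmetrizer matrix
`S_{d,r} = (1/r!) Σ_{i_1,...,i_r} Σ_{σ ∈ P_r} ⊗_{ℓ=1}^r e_{i_ℓ} e_{i_{σ(ℓ)}}ᵀ`. -/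
noncomputable def symr (d : ℕ) [NeZero d] (r : ℕ) :
    Matrix (Fin (d ^ r)) (Fin (d ^ r)) ℝ :=
  ((r.factorial : ℝ)⁻¹) •
    ∑ i : Fin r → Fin d, ∑ σ : Equiv.Perm (Fin r),
      kronPow r fun ℓ => Matrix.single (i ℓ) (i (σ ℓ)) 1

/-- The matrix `T_{d,r} = (1/r) Σ_{j=1}^r (I_{d^j} ⊗ K_{d^{r−j−1},d})(I_{d^{j−1}} ⊗ K_{d,d^{r−j}})`,
with the convention `K_{d^{−1},d} = 1 ∈ ℝ` (so that the `j = r` summand's first factor is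
`I_{d^r} ⊗ 1 = I_{d^r}`). -/
noncomputable def Tmat (d r : ℕ) : Matrix (Fin (d ^ r)) (Fin (d ^ r)) ℝ :=
  ((r : ℝ)⁻¹) •
    ∑ j ∈ (Finset.Icc 1 r).attach,
      (if h : j.1 = r then (1 : Matrix (Fin (d ^ r)) (Fin (d ^ r)) ℝ)
        else mcast
          (by
            have hj := Finset.mem_Icc.mp j.2
            rw [← pow_succ d (r - j.1 - 1), ← pow_add]; congr 1; omega)
          (by
            have hj := Finset.mem_Icc.mp j.2
            rw [← pow_succ d (r - j.1 - 1), ← pow_add]; congr 1; omega)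
          (kron (1 : Matrix (Fin (d ^ j.1)) (Fin (d ^ j.1)) ℝ)
            (commMat (d ^ (r - j.1 - 1)) d))) *
      mcast
        (by
          have hj := Finset.mem_Icc.mp j.2
          rw [← pow_succ' d (r - j.1), ← pow_add]; congr 1; omega)
        (by
          have hj := Finset.mem_Icc.mp j.2
          rw [← pow_succ' d (r - j.1), ← pow_add]; congr 1; omega)
        (kron (1 : Matrix (Fin (d ^ (j.1 - 1))) (Fin (d ^ (j.1 - 1))) ℝ)
          (commMat d (d ^ (r - j.1))))


namespace SymAux

/-- `t`-th base-`d` digit, least significant first. -/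
def ndig (d a t : ℕ) : ℕ := a / d ^ t % d

variable {d : ℕ}

lemma ndig_lt (hd : 0 < d) (a t : ℕ) : ndig d a t < d := Nat.mod_lt _ hd

lemma ndig_mod {s t : ℕ} (h : t < s) (a : ℕ) : ndig d (a % d ^ s) t = ndig d a t := by
  unfold ndig
  have hs : d ^ s = d ^ t * d ^ (s - t) := by rw [← pow_add]; congr 1; omega
  rw [hs, Nat.mod_mul_right_div_self,
    Nat.mod_mod_of_dvd _ (dvd_pow_self d (by omega : s - t ≠ 0))]

lemma ndig_div (a s t : ℕ) : ndig d (a / d ^ s) t = ndig d a (t + s) := by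
  unfold ndig
  rw [Nat.div_div_eq_div_mul, ← pow_add, Nat.add_comm s t]

lemma ndig_inj (hd : 0 < d) {k a b : ℕ} (ha : a < d ^ k) (hb : b < d ^ k)
    (h : ∀ t < k, ndig d a t = ndig d b t) : a = b := by
  induction k generalizing a b with
  | zero => simp at ha hb; omega
  | succ k ih =>
    have h0 := h 0 (Nat.succ_pos k)
    simp only [ndig, pow_zero, Nat.div_one] at h0
    have hich : a / d = b / d := by
      apply ih (Nat.div_lt_of_lt_mul (by rw [← pow_succ']; exact ha))
        (Nat.div_lt_of_lt_mul (by rw [← pow_succ']; exact hb))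
      intro t ht
      have := h (t + 1) (by omega)
      have e1 : ndig d (a / d) t = ndig d a (t + 1) := by
        have := ndig_div (d := d) a 1 t; rwa [pow_one] at this
      have e2 : ndig d (b / d) t = ndig d b (t + 1) := by
        have := ndig_div (d := d) b 1 t; rwa [pow_one] at this
      rw [e1, e2, this]
    rw [← Nat.div_add_mod a d, ← Nat.div_add_mod b d, hich, h0]

lemma ndig_low {s t u v : ℕ} (h : t < s) (hv : v < d ^ s) :
    ndig d (u * d ^ s + v) t = ndig d v t := by
  have hd : 0 < d := by
    rcases Nat.eq_zero_or_pos d with h0 | h0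
    · subst h0; simp [Nat.zero_pow (by omega : 0 < s)] at hv
    · exact h0
  unfold ndig
  have hs : d ^ s = d ^ (s - t) * d ^ t := by rw [← pow_add]; congr 1; omega
  have hdiv : (u * d ^ s + v) / d ^ t = u * d ^ (s - t) + v / d ^ t := by
    rw [hs, ← Nat.mul_assoc, Nat.add_comm, Nat.add_mul_div_right _ _ (pow_pos hd t),
      Nat.add_comm]
  rw [hdiv]
  have hst : d ^ (s - t) = d ^ (s - t - 1) * d := by
    rw [← pow_succ]; congr 1; omega
  rw [hst, ← Nat.mul_assoc, Nat.add_comm, Nat.add_mul_mod_self_right]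

lemma ndig_high {s t u v : ℕ} (h : s ≤ t) (hv : v < d ^ s) :
    ndig d (u * d ^ s + v) t = ndig d u (t - s) := by
  rcases Nat.eq_zero_or_pos d with h0 | hd
  · subst h0
    rcases Nat.eq_zero_or_pos s with hs | hs
    · subst hs
      have hv0 : v = 0 := by simpa using hv
      subst hv0
      simp [ndig]
    · rw [Nat.zero_pow hs] at hv; omega
  unfold ndig
  have h1 : (u * d ^ s + v) / d ^ s = u := by
    rw [Nat.mul_comm, Nat.mul_add_div (pow_pos hd s), Nat.div_eq_of_lt hv, Nat.add_zero]
  have ht : d ^ t = d ^ s * d ^ (t - s) := by rw [← pow_add]; congr 1; omega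
  rw [ht, ← Nat.div_div_eq_div_mul, h1]

end SymAux
open SymAux

section Layer2
variable (d : ℕ) [NeZero d] (r : ℕ)

lemma digit_val_eq {k : ℕ} (a : Fin (d ^ k)) (ℓ : ℕ) :
    (digit d k a ℓ).val = ndig d a.val (k - 1 - ℓ) := rfl

lemma hd_pos : 0 < d := Nat.pos_of_ne_zero (NeZero.ne d)

/-- The digit-vector map as an equivalence. -/
noncomputable def digEquiv : Fin (d ^ r) ≃ (Fin r → Fin d) := by
  apply Equiv.ofBijective (fun (a : Fin (d ^ r)) (ℓ : Fin r) => digit d r a ℓ.val)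
  rw [Fintype.bijective_iff_injective_and_card]
  constructor
  · intro a b hab
    apply Fin.ext
    apply ndig_inj (hd_pos d) a.isLt b.isLt
    intro t ht
    have := congrFun hab ⟨r - 1 - t, by omega⟩
    have h2 := congrArg Fin.val this
    rw [digit_val_eq, digit_val_eq] at h2
    simpa [Nat.sub_sub_self (by omega : t ≤ r - 1)] using h2
  · simp

lemma digEquiv_apply (a : Fin (d ^ r)) :
    digEquiv d r a = fun ℓ : Fin r => digit d r a ℓ.val := rfl

lemma digit_digEquiv_symm (f : Fin r → Fin d) (ℓ : Fin r) :
    digit d r ((digEquiv d r).symm f) ℓ = f ℓ := by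
  have h := congrFun ((digEquiv d r).apply_symm_apply f) ℓ
  rw [digEquiv_apply] at h
  exact h

/-- Permutation-type matrix attached to a map of digit positions. -/
noncomputable def Pm (σ : Fin r → Fin r) : Matrix (Fin (d ^ r)) (Fin (d ^ r)) ℝ :=
  fun a b => if ∀ ℓ : Fin r, digit d r a ℓ = digit d r b (σ ℓ) then 1 else 0

lemma Pm_apply (σ : Fin r → Fin r) (a b : Fin (d ^ r)) :
    Pm d r σ a b = if ∀ ℓ : Fin r, digit d r a ℓ = digit d r b (σ ℓ) then 1 else 0 := rfl

lemma Pm_id : Pm d r id = 1 := by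
  funext a b
  rw [Pm_apply, Matrix.one_apply]
  congr 1
  simp only [id, eq_iff_iff]
  constructor
  · intro h
    apply Fin.ext
    apply ndig_inj (hd_pos d) a.isLt b.isLt
    intro t ht
    have h2 := congrArg Fin.val (h ⟨r - 1 - t, by omega⟩)
    rw [digit_val_eq, digit_val_eq] at h2
    simpa [Nat.sub_sub_self (by omega : t ≤ r - 1)] using h2
  · rintro rfl ℓ; rfl

lemma Pm_mul (σ τ : Fin r → Fin r) : Pm d r σ * Pm d r τ = Pm d r (τ ∘ σ) := by
  funext a b
  rw [Matrix.mul_apply]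
  set c0 := (digEquiv d r).symm (fun ℓ => digit d r b (τ ℓ)) with hc0
  rw [Finset.sum_eq_single c0]
  · have h1 : Pm d r τ c0 b = 1 := by
      rw [Pm_apply, if_pos]
      intro ℓ
      rw [digit_digEquiv_symm]
    rw [h1, mul_one, Pm_apply, Pm_apply]
    congr 1
    simp only [eq_iff_iff]
    constructor
    · intro h ℓ
      have := h ℓ
      rwa [digit_digEquiv_symm] at this
    · intro h ℓ
      rw [digit_digEquiv_symm]
      exact h ℓ
  · intro c _ hc
    have h0 : Pm d r τ c b = 0 := by
      rw [Pm_apply, if_neg]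
      intro hcon
      apply hc
      apply (digEquiv d r).injective
      funext ℓ
      rw [digEquiv_apply, digEquiv_apply]
      show digit d r c ℓ.val = _
      rw [hcon ℓ]
      show _ = digit d r c0 ℓ.val
      rw [hc0, digit_digEquiv_symm]
    rw [h0, mul_zero]
  · intro hc; exact absurd (Finset.mem_univ c0) hc

/-- Translate a `Pm` digit condition to least-significant-digit form. -/
lemma Pm_cond_iff (σ : Fin r → Fin r) (σ' : ℕ → ℕ)
    (hσ : ∀ ℓ : Fin r, σ' (r - 1 - ℓ.val) = r - 1 - (σ ℓ).val)
    (a b : Fin (d ^ r)) :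
    (∀ ℓ : Fin r, digit d r a ℓ = digit d r b (σ ℓ)) ↔
      (∀ t < r, ndig d a.val t = ndig d b.val (σ' t)) := by
  constructor
  · intro h t ht
    have hℓ : (r : ℕ) - 1 - (r - 1 - t) = t := by omega
    have h2 := congrArg Fin.val (h ⟨r - 1 - t, by omega⟩)
    rw [digit_val_eq, digit_val_eq] at h2
    rw [← hσ ⟨r - 1 - t, by omega⟩] at h2
    simpa [hℓ] using h2
  · intro h ℓ
    apply Fin.ext
    rw [digit_val_eq, digit_val_eq, ← hσ ℓ]
    exact h (r - 1 - ℓ.val) (by have := ℓ.isLt; omega)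

end Layer2


section Layer3
variable (d : ℕ) [NeZero d] (r : ℕ)

lemma mcast_apply {m n m' n' : ℕ} (hm : m = m') (hn : n = n')
    (A : Matrix (Fin m) (Fin n) ℝ) (i : Fin m') (j : Fin n')
    (him : i.val < m) (hjn : j.val < n) :
    mcast hm hn A i j = A ⟨i.val, him⟩ ⟨j.val, hjn⟩ := rfl

lemma kron_apply {m n p q : ℕ} (A : Matrix (Fin m) (Fin n) ℝ)
    (B : Matrix (Fin p) (Fin q) ℝ) (i : Fin (m * p)) (j : Fin (n * q))
    (h1 : i.val / p < m) (h2 : j.val / q < n) (h3 : i.val % p < p) (h4 : j.val % q < q) :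
    kron A B i j = A ⟨i.val / p, h1⟩ ⟨j.val / q, h2⟩ * B ⟨i.val % p, h3⟩ ⟨j.val % q, h4⟩ := rfl

lemma commMat_apply (p s : ℕ) (a b : Fin (p * s)) :
    commMat p s a b = if (a : ℕ) = (b : ℕ) / p + (b : ℕ) % p * s then 1 else 0 := rfl

lemma one_apply_mk {n : ℕ} (x y : ℕ) (hx : x < n) (hy : y < n) :
    (1 : Matrix (Fin n) (Fin n) ℝ) ⟨x, hx⟩ ⟨y, hy⟩ = if x = y then 1 else 0 := by
  rw [Matrix.one_apply]
  simp [Fin.ext_iff]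

/-- Digit-position cycle map: fixes positions `< u`, sends `[u, u+v)` forward by `w`,
and `[u+v, u+v+w)` back by `v`. -/
def cycF (u v w : ℕ) : Fin r → Fin r := fun ℓ =>
  if ℓ.val < u then ℓ
  else if h : ℓ.val < u + v ∧ ℓ.val + w < r then ⟨ℓ.val + w, h.2⟩
  else ⟨ℓ.val - v, by have := ℓ.isLt; omega⟩

lemma mcast_kron_comm (u v w p q : ℕ) (hp : p = d ^ v) (hq : q = d ^ w)
    (huvw : u + v + w = r)
    (h1 h2 : d ^ u * (p * q) = d ^ r) :
    mcast h1 h2 (kron (1 : Matrix (Fin (d ^ u)) (Fin (d ^ u)) ℝ) (commMat p q))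
      = Pm d r (cycF r u v w) := by
  subst hp; subst hq
  have hdp : 0 < d := hd_pos d
  have hvw : d ^ v * d ^ w = d ^ (v + w) := (pow_add d v w).symm
  have hNpos : 0 < d ^ v * d ^ w := by positivity
  have hdr : d ^ r = d ^ u * (d ^ v * d ^ w) := h1.symm
  funext a b
  have haN : (a : ℕ) < d ^ u * (d ^ v * d ^ w) := hdr ▸ a.isLt
  have hbN : (b : ℕ) < d ^ u * (d ^ v * d ^ w) := hdr ▸ b.isLt
  rw [mcast_apply h1 h2 _ a b haN hbN,
    kron_apply _ _ _ _
      (Nat.div_lt_of_lt_mul (by simpa only [Fin.val_mk, Nat.mul_comm] using haN))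
      (Nat.div_lt_of_lt_mul (by simpa only [Fin.val_mk, Nat.mul_comm] using hbN))
      (Nat.mod_lt _ hNpos) (Nat.mod_lt _ hNpos),
    one_apply_mk, commMat_apply, Pm_apply]
  simp only [Fin.val_mk]
  simp only [hvw]
  set x := (b : ℕ) % d ^ (v + w) with hxdef
  have hNpos' : 0 < d ^ (v + w) := by positivity
  have hx' : x < d ^ v * d ^ w := by rw [hvw]; exact Nat.mod_lt _ hNpos'
  have hβ : x / d ^ v < d ^ w := Nat.div_lt_of_lt_mul hx'
  have hα : x % d ^ v < d ^ v := Nat.mod_lt _ (by positivity)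
  have hdigR : ∀ t, t < v + w → ndig d (x % d ^ v * d ^ w + x / d ^ v) t =
      ndig d (b : ℕ) (if t < w then t + v else t - w) := by
    intro t ht
    by_cases h : t < w
    · rw [if_pos h, ndig_low h hβ, ndig_div, hxdef, ndig_mod (by omega)]
    · rw [if_neg h, ndig_high (Nat.le_of_not_lt h) hβ,
        ndig_mod (show t - w < v by omega), hxdef, ndig_mod (show t - w < v + w by omega)]
  have hRlt : x % d ^ v * d ^ w + x / d ^ v < d ^ (v + w) := by
    rw [← hvw]
    have hh1 : x % d ^ v * d ^ w + x / d ^ v < (x % d ^ v + 1) * d ^ w := by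
      rw [Nat.succ_mul]; omega
    have hh2 : (x % d ^ v + 1) * d ^ w ≤ d ^ v * d ^ w := Nat.mul_le_mul_right _ hα
    omega
  have hQiff : ((a : ℕ) % d ^ (v + w) = x / d ^ v + x % d ^ v * d ^ w) ↔
      (∀ t, t < v + w → ndig d (a : ℕ) t = ndig d (b : ℕ) (if t < w then t + v else t - w)) := by
    constructor
    · intro hQ t ht
      rw [← ndig_mod ht (a : ℕ), hQ,
        (by omega : x / d ^ v + x % d ^ v * d ^ w = x % d ^ v * d ^ w + x / d ^ v),
        hdigR t ht]
    · intro h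
      have heq : (a : ℕ) % d ^ (v + w) = x % d ^ v * d ^ w + x / d ^ v := by
        apply ndig_inj hdp (Nat.mod_lt _ hNpos') hRlt
        intro t ht
        rw [ndig_mod ht, hdigR t ht]
        exact h t ht
      omega
  have hau : (a : ℕ) / d ^ (v + w) < d ^ u := by
    apply Nat.div_lt_of_lt_mul
    rw [Nat.mul_comm, hvw] at haN
    exact haN
  have hbu : (b : ℕ) / d ^ (v + w) < d ^ u := by
    apply Nat.div_lt_of_lt_mul
    rw [Nat.mul_comm, hvw] at hbN
    exact hbN
  have hPiff : ((a : ℕ) / d ^ (v + w) = (b : ℕ) / d ^ (v + w)) ↔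
      (∀ t, v + w ≤ t → t < r → ndig d (a : ℕ) t = ndig d (b : ℕ) t) := by
    constructor
    · intro hP t h1t h2t
      have e1 : ndig d (a : ℕ) t = ndig d ((a : ℕ) / d ^ (v + w)) (t - (v + w)) := by
        rw [ndig_div]; congr 1; omega
      have e2 : ndig d (b : ℕ) t = ndig d ((b : ℕ) / d ^ (v + w)) (t - (v + w)) := by
        rw [ndig_div]; congr 1; omega
      rw [e1, e2, hP]
    · intro h
      apply ndig_inj hdp hau hbu
      intro t ht
      rw [ndig_div, ndig_div]
      exact h (t + (v + w)) (by omega) (by omega)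
  have hcoh : ∀ ℓ : Fin r,
      (fun t => if t < w then t + v else if t < w + v then t - w else t) (r - 1 - ℓ.val)
        = r - 1 - ((cycF r u v w ℓ) : ℕ) := by
    intro ℓ
    have hℓ := ℓ.isLt
    dsimp only [cycF]
    split_ifs <;> first | omega | (simp only [Fin.val_mk]; omega)
  have key : (((a : ℕ) / d ^ (v + w) = (b : ℕ) / d ^ (v + w)) ∧
      ((a : ℕ) % d ^ (v + w) = x / d ^ v + x % d ^ v * d ^ w)) ↔
      (∀ ℓ : Fin r, digit d r a ℓ.val = digit d r b ((cycF r u v w ℓ) : ℕ)) := by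
    rw [Pm_cond_iff d r (cycF r u v w)
      (fun t => if t < w then t + v else if t < w + v then t - w else t) hcoh a b]
    rw [hPiff, hQiff]
    constructor
    · rintro ⟨hP, hQ⟩ t ht
      by_cases hl : t < v + w
      · have hq := hQ t hl
        by_cases h2 : t < w
        · simpa [h2] using hq
        · simp only [if_neg h2, if_pos (show t < w + v by omega)]
          simpa [h2] using hq
      · simp only [if_neg (show ¬ t < w by omega), if_neg (show ¬ t < w + v by omega)]
        exact hP t (by omega) ht
    · intro h
      constructor
      · intro t h1t h2t
        have ht := h t h2t
        simpa [if_neg (show ¬ t < w by omega), if_neg (show ¬ t < w + v by omega)] using ht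
      · intro t ht
        have h' := h t (by omega)
        by_cases h2 : t < w
        · simpa [h2] using h'
        · simp only [if_neg h2, if_pos (show t < w + v by omega)] at h'
          simpa [h2] using h'
  by_cases hco : ∀ ℓ : Fin r, digit d r a ℓ.val = digit d r b ((cycF r u v w ℓ) : ℕ)
  · obtain ⟨k1, k2⟩ := key.mpr hco
    rw [if_pos hco, if_pos k1, if_pos k2, one_mul]
  · rw [if_neg hco]
    by_cases k1 : (a : ℕ) / d ^ (v + w) = (b : ℕ) / d ^ (v + w)
    · have k2 : ¬ ((a : ℕ) % d ^ (v + w) = x / d ^ v + x % d ^ v * d ^ w) :=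
        fun k2 => hco (key.mp ⟨k1, k2⟩)
      rw [if_pos k1, if_neg k2, mul_zero]
    · rw [if_neg k1, zero_mul]

end Layer3


section Layer4
variable (d : ℕ) [NeZero d] (r : ℕ)

/-- Transposition of positions `n` and `m` (identity if out of range). -/
def swE (r n m : ℕ) : Equiv.Perm (Fin r) :=
  if h : n < r ∧ m < r then Equiv.swap ⟨n, h.1⟩ ⟨m, h.2⟩ else 1

lemma swE_val {n m : ℕ} (hn : n < r) (hm : m < r) (ℓ : Fin r) :
    (swE r n m ℓ).val = if ℓ.val = n then m else if ℓ.val = m then n else ℓ.val := by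
  rw [swE, dif_pos ⟨hn, hm⟩, Equiv.swap_apply_def]
  split_ifs <;> simp_all [Fin.ext_iff]

lemma cycF_val (u v w : ℕ) (huvw : u + v + w = r) (ℓ : Fin r) :
    (cycF r u v w ℓ).val =
      if ℓ.val < u then ℓ.val else if ℓ.val < u + v then ℓ.val + w else ℓ.val - v := by
  have hℓ := ℓ.isLt
  dsimp only [cycF]
  split_ifs <;> first | rfl | (simp only [Fin.val_mk]) | omega
  all_goals omega

lemma Pm_congr_val (σ τ : Fin r → Fin r) (h : ∀ ℓ, (σ ℓ).val = (τ ℓ).val) :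
    Pm d r σ = Pm d r τ :=
  congrArg (Pm d r) (funext fun ℓ => Fin.ext (h ℓ))

lemma Tmat_eq (hr : 1 ≤ r) :
    Tmat d r = ((r : ℝ))⁻¹ •
      ∑ j ∈ (Finset.Icc 1 r).attach, Pm d r ⇑(swE r (j.1 - 1) (r - 1)) := by
  unfold Tmat
  congr 1
  apply Finset.sum_congr rfl
  intro j _
  obtain ⟨hj1, hjr⟩ := Finset.mem_Icc.mp j.2
  by_cases hjr' : j.1 = r
  · rw [dif_pos hjr', one_mul,
      mcast_kron_comm d r (j.1 - 1) 1 (r - j.1) d (d ^ (r - j.1)) (pow_one d).symm rfl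
        (by omega)]
    apply Pm_congr_val
    intro ℓ
    have hℓ := ℓ.isLt
    rw [cycF_val r (j.1 - 1) 1 (r - j.1) (by omega) ℓ, swE_val r (by omega) (by omega) ℓ]
    split_ifs <;> omega
  · have hjlt : j.1 < r := by omega
    rw [dif_neg hjr',
      mcast_kron_comm d r j.1 (r - j.1 - 1) 1 (d ^ (r - j.1 - 1)) d rfl (pow_one d).symm
        (by omega),
      mcast_kron_comm d r (j.1 - 1) 1 (r - j.1) d (d ^ (r - j.1)) (pow_one d).symm rfl
        (by omega),
      Pm_mul]
    apply Pm_congr_val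
    intro ℓ
    have hℓ := ℓ.isLt
    rw [Function.comp_apply, cycF_val r (j.1 - 1) 1 (r - j.1) (by omega),
      cycF_val r j.1 (r - j.1 - 1) 1 (by omega) ℓ, swE_val r (by omega) (by omega) ℓ]
    split_ifs <;> omega

end Layer4


section Layer5
variable (d : ℕ) [NeZero d] (r : ℕ)

/-- Extension of a position map on `Fin k` to `Fin r` by the identity. -/
def extendF (r k : ℕ) (σ : Fin k → Fin k) : Fin r → Fin r := fun ℓ =>
  if h : ℓ.val < k ∧ k ≤ r then
    ⟨(σ ⟨ℓ.val, h.1⟩).val, lt_of_lt_of_le (σ ⟨ℓ.val, h.1⟩).isLt h.2⟩ else ℓ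

lemma mcast_kron_Pm_one (k : ℕ) (hk : k ≤ r) (σ : Fin k → Fin k)
    (h1 h2 : d ^ k * d ^ (r - k) = d ^ r) :
    mcast h1 h2 (kron (Pm d k σ) (1 : Matrix (Fin (d ^ (r - k))) (Fin (d ^ (r - k))) ℝ))
      = Pm d r (extendF r k σ) := by
  have hdp : 0 < d := hd_pos d
  have hm : 0 < d ^ (r - k) := by positivity
  funext a b
  have haN : (a : ℕ) < d ^ k * d ^ (r - k) := by rw [h1]; exact a.isLt
  have hbN : (b : ℕ) < d ^ k * d ^ (r - k) := by rw [h1]; exact b.isLt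
  have hau : (a : ℕ) / d ^ (r - k) < d ^ k :=
    Nat.div_lt_of_lt_mul (by rw [Nat.mul_comm]; exact haN)
  have hbu : (b : ℕ) / d ^ (r - k) < d ^ k :=
    Nat.div_lt_of_lt_mul (by rw [Nat.mul_comm]; exact hbN)
  rw [mcast_apply h1 h2 _ a b haN hbN,
    kron_apply _ _ _ _
      (Nat.div_lt_of_lt_mul (by simpa only [Fin.val_mk, Nat.mul_comm] using haN))
      (Nat.div_lt_of_lt_mul (by simpa only [Fin.val_mk, Nat.mul_comm] using hbN))
      (Nat.mod_lt _ hm) (Nat.mod_lt _ hm),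
    one_apply_mk, Pm_apply, Pm_apply]
  simp only [Fin.val_mk]
  have hdig : ∀ (x : Fin (d ^ r)) (hxu : (x : ℕ) / d ^ (r - k) < d ^ k) (t : ℕ), t < k →
      (digit d k (⟨(x : ℕ) / d ^ (r - k), hxu⟩ : Fin (d ^ k)) t).val
        = ndig d (x : ℕ) (r - 1 - t) := by
    intro x hxu t ht
    rw [digit_val_eq]
    simp only [Fin.val_mk]
    rw [ndig_div]
    congr 1
    omega
  have key : ((∀ ℓk : Fin k, digit d k (⟨(a : ℕ) / d ^ (r - k), hau⟩ : Fin (d ^ k)) ℓk.val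
        = digit d k (⟨(b : ℕ) / d ^ (r - k), hbu⟩ : Fin (d ^ k)) (σ ℓk).val)
      ∧ (a : ℕ) % d ^ (r - k) = (b : ℕ) % d ^ (r - k)) ↔
      (∀ ℓ : Fin r, digit d r a ℓ.val = digit d r b ((extendF r k σ ℓ) : ℕ)) := by
    constructor
    · rintro ⟨hP, hQ⟩ ℓ
      by_cases hℓ : ℓ.val < k
      · have h := congrArg Fin.val (hP ⟨ℓ.val, hℓ⟩)
        rw [hdig a hau _ (by omega), hdig b hbu _ (σ ⟨ℓ.val, hℓ⟩).isLt] at h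
        apply Fin.ext
        rw [digit_val_eq, digit_val_eq]
        have hex : ((extendF r k σ ℓ) : ℕ) = (σ ⟨ℓ.val, hℓ⟩).val := by
          rw [extendF, dif_pos ⟨hℓ, hk⟩]
        rw [hex]
        exact h
      · have hex : ((extendF r k σ ℓ) : ℕ) = ℓ.val := by
          rw [extendF, dif_neg (by omega)]
        rw [hex]
        apply Fin.ext
        rw [digit_val_eq, digit_val_eq]
        have ht : r - 1 - ℓ.val < r - k := by have := ℓ.isLt; omega
        rw [← ndig_mod ht (a : ℕ), ← ndig_mod ht (b : ℕ), hQ]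
    · intro h
      constructor
      · intro ℓk
        apply Fin.ext
        have hℓr : ℓk.val < r := by omega
        have h2 := congrArg Fin.val (h ⟨ℓk.val, hℓr⟩)
        have hex : ((extendF r k σ ⟨ℓk.val, hℓr⟩) : ℕ) = (σ ℓk).val := by
          rw [extendF, dif_pos ⟨ℓk.isLt, hk⟩]
        rw [hex] at h2
        rw [hdig a hau _ ℓk.isLt, hdig b hbu _ (σ ℓk).isLt]
        rw [digit_val_eq, digit_val_eq] at h2
        simpa using h2
      · apply ndig_inj hdp (Nat.mod_lt _ hm) (Nat.mod_lt _ hm)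
        intro t ht
        have hℓr : r - 1 - t < r := by omega
        have hℓk : ¬ (r - 1 - t < k) := by omega
        have h2 := congrArg Fin.val (h ⟨r - 1 - t, hℓr⟩)
        have hex : ((extendF r k σ ⟨r - 1 - t, hℓr⟩) : ℕ) = r - 1 - t := by
          rw [extendF, dif_neg (by simp only [Fin.val_mk]; omega)]
        rw [hex, digit_val_eq, digit_val_eq] at h2
        simp only [Fin.val_mk] at h2
        have harw : r - 1 - (r - 1 - t) = t := by omega
        rw [harw] at h2
        rw [ndig_mod ht, ndig_mod ht]
        exact h2
  by_cases hco : ∀ ℓ : Fin r, digit d r a ℓ.val = digit d r b ((extendF r k σ ℓ) : ℕ)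
  · obtain ⟨k1, k2⟩ := key.mpr hco
    rw [if_pos hco, if_pos k1, if_pos k2, one_mul]
  · rw [if_neg hco]
    by_cases k1 : ∀ ℓk : Fin k, digit d k (⟨(a : ℕ) / d ^ (r - k), hau⟩ : Fin (d ^ k)) ℓk.val
        = digit d k (⟨(b : ℕ) / d ^ (r - k), hbu⟩ : Fin (d ^ k)) (σ ℓk).val
    · have k2 : ¬ ((a : ℕ) % d ^ (r - k) = (b : ℕ) % d ^ (r - k)) :=
        fun k2 => hco (key.mp ⟨k1, k2⟩)
      rw [if_pos k1, if_neg k2, mul_zero]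
    · rw [if_neg k1, zero_mul]

lemma mcast_sum {m n m' n' : ℕ} (hm : m = m') (hn : n = n') {ι : Type*} (s : Finset ι)
    (f : ι → Matrix (Fin m) (Fin n) ℝ) :
    mcast hm hn (∑ x ∈ s, f x) = ∑ x ∈ s, mcast hm hn (f x) := by
  funext a b
  simp [mcast, Matrix.sum_apply]

lemma mcast_smul {m n m' n' : ℕ} (hm : m = m') (hn : n = n') (c : ℝ)
    (A : Matrix (Fin m) (Fin n) ℝ) :
    mcast hm hn (c • A) = c • mcast hm hn A := rfl

lemma kron_smul_left {m n p q : ℕ} (c : ℝ) (A : Matrix (Fin m) (Fin n) ℝ)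
    (B : Matrix (Fin p) (Fin q) ℝ) :
    kron (c • A) B = c • kron A B := by
  funext a b
  exact mul_assoc c _ _

lemma kron_sum_left {m n p q : ℕ} {ι : Type*} (s : Finset ι)
    (f : ι → Matrix (Fin m) (Fin n) ℝ) (B : Matrix (Fin p) (Fin q) ℝ) :
    kron (∑ x ∈ s, f x) B = ∑ x ∈ s, kron (f x) B := by
  funext a b
  simp only [kron, Matrix.sum_apply, Finset.sum_mul]

end Layer5


section Layer6
variable (d : ℕ) [NeZero d] (r : ℕ)

/-- The `k`-th factor of the factorization, expressed via `Pm`. -/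
noncomputable def gmat (k : ℕ) : Matrix (Fin (d ^ r)) (Fin (d ^ r)) ℝ :=
  (((k + 1 : ℕ) : ℝ))⁻¹ • ∑ j ∈ Finset.Icc 1 (k + 1), Pm d r ⇑(swE r (j - 1) k)

lemma factor_eq (k : ℕ) (hk : k < r) (h1 h2 : d ^ (k + 1) * d ^ (r - (k + 1)) = d ^ r) :
    mcast h1 h2 (kron (Tmat d (k + 1))
      (1 : Matrix (Fin (d ^ (r - (k + 1)))) (Fin (d ^ (r - (k + 1)))) ℝ)) = gmat d r k := by
  rw [Tmat_eq d (k + 1) (by omega), kron_smul_left, kron_sum_left, mcast_smul, mcast_sum]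
  unfold gmat
  congr 1
  rw [← Finset.sum_attach (Finset.Icc 1 (k + 1)) (fun j => Pm d r ⇑(swE r (j - 1) k))]
  apply Finset.sum_congr rfl
  intro j _
  obtain ⟨hj1, hj2⟩ := Finset.mem_Icc.mp j.2
  rw [mcast_kron_Pm_one d r (k + 1) (by omega) _ h1 h2]
  apply Pm_congr_val
  intro ℓ
  have hℓ := ℓ.isLt
  simp only [Nat.add_sub_cancel]
  by_cases hc : ℓ.val < k + 1
  · have hex : ((extendF r (k + 1) (⇑(swE (k + 1) (j.1 - 1) k)) ℓ) : ℕ)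
        = (swE (k + 1) (j.1 - 1) k ⟨ℓ.val, hc⟩).val := by
      rw [extendF, dif_pos ⟨hc, by omega⟩]
    rw [hex, swE_val (k + 1) (by omega) (by omega), swE_val r (by omega) (by omega)]
  · have hex : ((extendF r (k + 1) (⇑(swE (k + 1) (j.1 - 1) k)) ℓ) : ℕ) = ℓ.val := by
      rw [extendF, dif_neg (by omega)]
    rw [hex, swE_val r (by omega) (by omega)]
    split_ifs <;> omega

/-- Permutations of `Fin r` fixing all positions `≥ m`. -/
def Sfix (m : ℕ) : Finset (Equiv.Perm (Fin r)) :=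
  Finset.univ.filter (fun σ => ∀ ℓ : Fin r, m ≤ ℓ.val → σ ℓ = ℓ)

lemma Sfix_zero : Sfix r 0 = {1} := by
  ext σ
  simp only [Sfix, Finset.mem_filter, Finset.mem_univ, true_and, Finset.mem_singleton]
  constructor
  · intro h
    exact Equiv.ext fun ℓ => h ℓ (Nat.zero_le _)
  · rintro rfl ℓ _
    rfl

lemma Sfix_top : Sfix r r = Finset.univ := by
  ext σ
  simp only [Sfix, Finset.mem_filter, Finset.mem_univ, true_and, iff_true]
  intro ℓ hℓ
  exact absurd ℓ.isLt (by omega)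

lemma swE_mul_self (n m : ℕ) : swE r n m * swE r n m = 1 := by
  rw [swE]
  split_ifs with h
  · exact Equiv.swap_mul_self _ _
  · exact one_mul 1

end Layer6


section Layer7
variable (d : ℕ) [NeZero d] (r : ℕ)

lemma mem_Sfix {m : ℕ} {σ : Equiv.Perm (Fin r)} :
    σ ∈ Sfix r m ↔ ∀ ℓ : Fin r, m ≤ ℓ.val → σ ℓ = ℓ := by
  simp [Sfix]

lemma swE_apply_high {n m : ℕ} (hn : n < r) (hm : m < r) (ℓ : Fin r)
    (h1 : ℓ.val ≠ n) (h2 : ℓ.val ≠ m) : swE r n m ℓ = ℓ := by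
  apply Fin.ext
  rw [swE_val r hn hm, if_neg h1, if_neg h2]

lemma step_sum (m : ℕ) (hm : m < r) :
    ∑ σ ∈ Sfix r m, ∑ j ∈ Finset.Icc 1 (m + 1), Pm d r ⇑(swE r (j - 1) m * σ)
      = ∑ π ∈ Sfix r (m + 1), Pm d r ⇑π := by
  rw [← Finset.sum_product']
  have hπm : ∀ π ∈ Sfix r (m + 1), ((π ⟨m, hm⟩ : Fin r) : ℕ) ≤ m := by
    intro π hπ
    rw [mem_Sfix] at hπ
    by_contra hcon
    have h2 : π (π ⟨m, hm⟩) = π ⟨m, hm⟩ := hπ _ (by omega)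
    have h3 := π.injective h2
    have := congrArg Fin.val h3
    simp only [Fin.val_mk] at this
    omega
  refine Finset.sum_nbij' (i := fun p => swE r (p.2 - 1) m * p.1)
    (j := fun π => (swE r ((π ⟨m, hm⟩ : Fin r) : ℕ) m * π, ((π ⟨m, hm⟩ : Fin r) : ℕ) + 1))
    ?_ ?_ ?_ ?_ ?_
  · intro p hp
    rw [Finset.mem_product] at hp
    obtain ⟨hσ, hj⟩ := hp
    rw [mem_Sfix] at hσ
    obtain ⟨hj1, hj2⟩ := Finset.mem_Icc.mp hj
    rw [mem_Sfix]
    intro ℓ hℓ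
    rw [Equiv.Perm.mul_apply, hσ ℓ (by omega)]
    exact swE_apply_high r (by omega) hm ℓ (by omega) (by omega)
  · intro π hπ
    have hv := hπm π hπ
    rw [mem_Sfix] at hπ
    rw [Finset.mem_product]
    constructor
    · rw [mem_Sfix]
      intro ℓ hℓ
      rcases Nat.eq_or_lt_of_le hℓ with he | hlt
      · have hℓeq : ℓ = ⟨m, hm⟩ := Fin.ext he.symm
        subst hℓeq
        rw [Equiv.Perm.mul_apply]
        apply Fin.ext
        rw [swE_val r (by omega) hm, if_pos rfl]
      · rw [Equiv.Perm.mul_apply, hπ ℓ (by omega)]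
        exact swE_apply_high r (by omega) hm ℓ (by omega) (by omega)
    · rw [Finset.mem_Icc]
      dsimp only
      omega
  · intro p hp
    rw [Finset.mem_product] at hp
    obtain ⟨hσ, hj⟩ := hp
    rw [mem_Sfix] at hσ
    obtain ⟨hj1, hj2⟩ := Finset.mem_Icc.mp hj
    have hX : (((swE r (p.2 - 1) m * p.1) ⟨m, hm⟩ : Fin r) : ℕ) = p.2 - 1 := by
      rw [Equiv.Perm.mul_apply, hσ ⟨m, hm⟩ (by simp), swE_val r (by omega) hm]
      simp only [Fin.val_mk]
      split_ifs <;> omega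
    rw [Prod.ext_iff]
    constructor
    · show swE r _ m * (swE r (p.2 - 1) m * p.1) = p.1
      rw [hX, ← mul_assoc, swE_mul_self, one_mul]
    · show _ + 1 = p.2
      rw [hX]
      omega
  · intro π hπ
    show swE r (_ + 1 - 1) m * (swE r _ m * π) = π
    rw [Nat.add_sub_cancel, ← mul_assoc, swE_mul_self, one_mul]
  · intro p _
    rfl

lemma prod_eq (m : ℕ) (hm : m ≤ r) :
    ((List.range m).map (gmat d r)).prod
      = ((m.factorial : ℝ))⁻¹ • ∑ σ ∈ Sfix r m, Pm d r ⇑σ := by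
  induction m with
  | zero =>
    simp [Sfix_zero, Pm_id]
  | succ m ih =>
    have hm' : m ≤ r := by omega
    rw [List.range_succ, List.map_append, List.prod_append, List.map_singleton,
      List.prod_singleton, ih hm']
    show _ = (((m + 1).factorial : ℝ))⁻¹ • _
    rw [gmat, smul_mul_assoc, mul_smul_comm, smul_smul, Finset.sum_mul_sum]
    have hterm : ∀ σ ∈ Sfix r m, ∀ j ∈ Finset.Icc 1 (m + 1),
        Pm d r ⇑σ * Pm d r ⇑(swE r (j - 1) m) = Pm d r ⇑(swE r (j - 1) m * σ) := by
      intro σ _ j _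
      rw [Pm_mul]
      rfl
    rw [Finset.sum_congr rfl (fun σ hσ => Finset.sum_congr rfl (fun j hj => hterm σ hσ j hj)),
      step_sum d r m (by omega)]
    congr 1
    rw [Nat.factorial_succ]
    push_cast
    rw [mul_inv]
    ring

end Layer7


section Layer8
variable (d : ℕ) [NeZero d] (r : ℕ)

lemma symr_eq : symr d r = ((r.factorial : ℝ))⁻¹ • ∑ σ ∈ Sfix r r, Pm d r ⇑σ := by
  rw [Sfix_top]
  unfold symr
  congr 1
  rw [Finset.sum_comm, ← Equiv.sum_comp (Equiv.inv (Equiv.Perm (Fin r)))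
    (fun σ => Pm d r ⇑σ)]
  apply Finset.sum_congr rfl
  intro σ _
  show _ = Pm d r ⇑σ⁻¹
  funext a b
  rw [Matrix.sum_apply]
  have hterm : ∀ i : Fin r → Fin d,
      kronPow r (fun ℓ => Matrix.single (i ℓ) (i (σ ℓ)) (1 : ℝ)) a b
        = if (∀ ℓ : Fin r, i ℓ = digit d r a ℓ.val ∧ i (σ ℓ) = digit d r b ℓ.val)
          then 1 else 0 := by
    intro i
    show (∏ ℓ : Fin r,
      Matrix.single (i ℓ) (i (σ ℓ)) (1 : ℝ) (digit d r a ℓ.val) (digit d r b ℓ.val)) = _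
    have hstd : ∀ ℓ : Fin r,
        Matrix.single (i ℓ) (i (σ ℓ)) (1 : ℝ) (digit d r a ℓ.val) (digit d r b ℓ.val)
          = if (i ℓ = digit d r a ℓ.val ∧ i (σ ℓ) = digit d r b ℓ.val) then 1 else 0 := by
      intro ℓ
      rfl
    rw [Finset.prod_congr rfl (fun ℓ _ => hstd ℓ), Finset.prod_boole]
    congr 1
    simp
  rw [Finset.sum_congr rfl (fun i _ => hterm i), Pm_apply,
    Finset.sum_eq_single (fun ℓ : Fin r => digit d r a ℓ.val)]
  · congr 1
    simp only [eq_iff_iff]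
    constructor
    · intro h ℓ
      have h2 := (h (σ⁻¹ ℓ)).2
      rwa [← Equiv.Perm.mul_apply, mul_inv_cancel, Equiv.Perm.one_apply] at h2
    · intro h ℓ
      refine ⟨by trivial, ?_⟩
      have h2 := h (σ ℓ)
      rwa [← Equiv.Perm.mul_apply, inv_mul_cancel, Equiv.Perm.one_apply] at h2
  · intro i _ hine
    rw [if_neg]
    intro hcon
    exact hine (funext fun ℓ => (hcon ℓ).1)
  · intro hco
    exact absurd (Finset.mem_univ _) hco

lemma pmap_eq_map_gen {α β : Type*} (p : α → Prop) (f : ∀ a, p a → β) (g : α → β)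
    (hfg : ∀ a ha, f a ha = g a) : ∀ (l : List α) (H : ∀ a ∈ l, p a),
      l.pmap f H = l.map g := by
  intro l
  induction l with
  | nil => intro H; rfl
  | cons x xs ih =>
    intro H
    rw [List.pmap, List.map, ih]
    congr 1
    exact hfg x _

end Layer8

/-- Corollary 1: for `r ≥ 1` the symmetrizer matrix factorizes as
`S_{d,r} = (T_{d,1} ⊗ I_{d^{r−1}})(T_{d,2} ⊗ I_{d^{r−2}}) ⋯ (T_{d,r−1} ⊗ I_d) T_{d,r}`,
the ordered product over `k = 1, ..., r` of `T_{d,k} ⊗ I_{d^{r−k}}`. -/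
theorem symmetrizer_factorization (d : ℕ) [NeZero d] (r : ℕ) (hr : 1 ≤ r) :
    symr d r =
      (((List.range r).pmap
        (fun k (hk : k < r) =>
          (mcast (by rw [← pow_add]; congr 1; omega) (by rw [← pow_add]; congr 1; omega)
            (kron (Tmat d (k + 1))
              (1 : Matrix (Fin (d ^ (r - (k + 1)))) (Fin (d ^ (r - (k + 1)))) ℝ)) :
            Matrix (Fin (d ^ r)) (Fin (d ^ r)) ℝ))
        (fun a ha => List.mem_range.mp ha)).prod) := by
  rw [pmap_eq_map_gen (fun k => k < r) _ (gmat d r)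
    (fun k hk => factor_eq d r k hk _ _) (List.range r) (fun a ha => List.mem_range.mp ha)]
  rw [prod_eq d r r le_rfl, symr_eq d r]
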